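/- Let H be a digraph on a finite vertex set V with n = |V| ≥ 2 vertices, equipped with an edge-weight function w : E → ℕ satisfying 1 ≤ w(e) < ω for every edge e, where ω ∈ ℕ. Let r ∈ V, let d1 < d2 be natural numbers, both divisible by ω, with d2 − d1 ≥ 2·ω·lg n, and let k ≥ 1 be an integer. Suppose |{v ∈ V : d_{H,w}(r, v) ≤ d1}| ≥ k and |{v ∈ V : d_{H,w}(r, v) ≥ d2}| ≥ k, where unreachable vertices have distance ∞. Then there exists an integer d divisible by ω with d1 < d ≤ d2 such that the set S = {v ∈ V : d − ω < d_{H,w}(r, v) ≤ d} is a q-quality separator of H with q = (d2 − d1)/(2·ω·lg n), and every SCC of H ∖ E(S) contains at most n − k vertices. -/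

import Mathlib

variable {V : Type*}

/-- Unweighted walk distance in the digraph with edge relation `E`:
the minimum number of edges of a walk from `u` to `v`, `∞` if none exists. -/
noncomputable def ddist (E : V → V → Prop) (u v : V) : ℕ∞ :=
  sInf { n : ℕ∞ | ∃ l : List V, l.Chain' E ∧ l.head? = some u ∧ l.getLast? = some v ∧
    n = ((l.length - 1 : ℕ) : ℕ∞) }

/-- Weighted walk distance: the minimum total weight of a walk from `u` to `v`. -/
noncomputable def wdist (E : V → V → Prop) (w : V → V → ℕ) (u v : V) : ℕ∞ :=
  sInf { n : ℕ∞ | ∃ l : List V, l.Chain' E ∧ l.head? = some u ∧ l.getLast? = some v ∧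
    n = ((((l.zip l.tail).map fun p => w p.1 p.2).sum : ℕ) : ℕ∞) }

/-- The digraph `H ∖ E(S)`: edges of `E` with neither endpoint in `S`. -/
def edgesAvoiding (E : V → V → Prop) (S : Set V) : V → V → Prop :=
  fun a b => E a b ∧ a ∉ S ∧ b ∉ S

/-- The strongly connected component of `v`: vertices mutually reachable with `v`. -/
def scc (E : V → V → Prop) (v : V) : Set V :=
  {u | Relation.ReflTransGen E u v ∧ Relation.ReflTransGen E v u}

/-- `S` is a `q`-quality separator: every SCC of `H ∖ E(S)` has at most `|V| - q·|S|` vertices. -/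
def QualSep [Fintype V] (E : V → V → Prop) (q : ℝ) (S : Set V) : Prop :=
  ∀ v : V, ((scc (edgesAvoiding E S) v).ncard : ℝ) ≤ (Fintype.card V : ℝ) - q * S.ncard

/-- Edge relation of the induced subdigraph on `C`. -/
def induced (E : V → V → Prop) (C : Set V) : V → V → Prop :=
  fun a b => E a b ∧ a ∈ C ∧ b ∈ C

/-- The (finite) collection of vertex sets of the SCCs of the digraph. -/
noncomputable def sccs [Fintype V] (E : V → V → Prop) : Finset (Set V) :=
  letI := Classical.decEq (Set V)
  Finset.image (fun v => scc E v) Finset.univ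

namespace WThinAux

/-- Total weight of a walk. -/
def wsum (w : V → V → ℕ) (l : List V) : ℕ :=
  ((l.zip l.tail).map fun p => w p.1 p.2).sum

lemma wsum_cons_cons (w : V → V → ℕ) (a b : V) (t : List V) :
    wsum w (a :: b :: t) = w a b + wsum w (b :: t) := rfl

lemma wsum_concat (w : V → V → ℕ) : ∀ (l : List V) (u y : V), l.getLast? = some u →
    wsum w (l ++ [y]) = wsum w l + w u y
  | [], u, y, h => by simp at h
  | [a], u, y, h => by
      simp at h
      subst h
      simp [wsum]
  | a :: b :: t, u, y, h => by
      have h' : (b :: t).getLast? = some u := by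
        rw [← h]; rfl
      have ih := wsum_concat w (b :: t) u y h'
      show wsum w (a :: b :: (t ++ [y])) = wsum w (a :: b :: t) + w u y
      rw [wsum_cons_cons, wsum_cons_cons]
      have : (b :: (t ++ [y])) = (b :: t) ++ [y] := rfl
      rw [this, ih]
      ring

lemma wdist_le (E : V → V → Prop) (w : V → V → ℕ) {u v : V} (l : List V)
    (hc : l.Chain' E) (hh : l.head? = some u) (hl : l.getLast? = some v) :
    wdist E w u v ≤ (wsum w l : ℕ∞) :=
  sInf_le ⟨l, hc, hh, hl, rfl⟩

lemma exists_walk {E : V → V → Prop} {w : V → V → ℕ} {r u : V} {c : ℕ}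
    (h : wdist E w r u ≤ (c : ℕ∞)) :
    ∃ l : List V, l.Chain' E ∧ l.head? = some r ∧ l.getLast? = some u ∧ wsum w l ≤ c := by
  have h2 : wdist E w r u < ((c + 1 : ℕ) : ℕ∞) :=
    lt_of_le_of_lt h (by exact_mod_cast Nat.lt_succ_self c)
  obtain ⟨x, hx, hlt⟩ := sInf_lt_iff.mp h2
  obtain ⟨l, hc, hh, hl, rfl⟩ := hx
  refine ⟨l, hc, hh, hl, ?_⟩
  have : (wsum w l : ℕ) < c + 1 := by exact_mod_cast hlt
  omega

lemma relax {E : V → V → Prop} {w : V → V → ℕ} {r u v : V} {c : ℕ} (hE : E u v)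
    (h : wdist E w r u ≤ (c : ℕ∞)) :
    wdist E w r v ≤ ((c + w u v : ℕ) : ℕ∞) := by
  obtain ⟨l, hc, hh, hl, hs⟩ := exists_walk h
  have hlast : (l ++ [v]).getLast? = some v := by
    rw [List.getLast?_append]; rfl
  have hhead : (l ++ [v]).head? = some r := by
    cases l with
    | nil => simp at hl
    | cons a t => simpa using hh
  have hchain : (l ++ [v]).Chain' E := by
    show List.IsChain E (l ++ [v])
    rw [List.isChain_append]
    refine ⟨hc, List.isChain_singleton v, ?_⟩
    intro x hx y hy
    simp at hy
    subst hy
    rw [hl] at hx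
    simp at hx
    subst hx
    exact hE
  calc wdist E w r v ≤ (wsum w (l ++ [v]) : ℕ∞) := wdist_le E w _ hchain hhead hlast
    _ = ((wsum w l + w u v : ℕ) : ℕ∞) := by rw [wsum_concat w l u v hl]
    _ ≤ _ := by exact_mod_cast Nat.add_le_add_right hs _

section Cross
variable {E : V → V → Prop} {w : V → V → ℕ} {r : V} {ω d : ℕ}

lemma cross (hw : ∀ a b, E a b → 1 ≤ w a b ∧ w a b < ω) (hωd : ω ≤ d) {x y : V}
    (hxy : Relation.ReflTransGen
      (edgesAvoiding E {v : V | ((d - ω : ℕ) : ℕ∞) < wdist E w r v ∧ wdist E w r v ≤ (d : ℕ∞)}) x y)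
    (hx : wdist E w r x ≤ ((d - ω : ℕ) : ℕ∞)) :
    wdist E w r y ≤ ((d - ω : ℕ) : ℕ∞) := by
  induction hxy with
  | refl => exact hx
  | @tail z y hzz hedge ih =>
    obtain ⟨hE, hzS, hyS⟩ := hedge
    have h1 := relax hE ih
    have hwb := hw _ _ hE
    have h2 : (d - ω) + w z y ≤ d := by omega
    have h3 : wdist E w r y ≤ (d : ℕ∞) :=
      le_trans h1 (by exact_mod_cast h2)
    by_contra hcon
    exact hyS ⟨lt_of_not_ge hcon, h3⟩

lemma scc_low (hw : ∀ a b, E a b → 1 ≤ w a b ∧ w a b < ω) (hωd : ω ≤ d) {v : V}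
    (hv : wdist E w r v ≤ ((d - ω : ℕ) : ℕ∞)) :
    scc (edgesAvoiding E {v : V | ((d - ω : ℕ) : ℕ∞) < wdist E w r v ∧ wdist E w r v ≤ (d : ℕ∞)}) v
      ⊆ {u : V | wdist E w r u ≤ ((d - ω : ℕ) : ℕ∞)} := by
  intro u hu
  exact cross hw hωd hu.2 hv

lemma scc_high (hw : ∀ a b, E a b → 1 ≤ w a b ∧ w a b < ω) (hωd : ω ≤ d) {v : V}
    (hv : (d : ℕ∞) < wdist E w r v) :
    scc (edgesAvoiding E {v : V | ((d - ω : ℕ) : ℕ∞) < wdist E w r v ∧ wdist E w r v ≤ (d : ℕ∞)}) v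
      ⊆ {u : V | (d : ℕ∞) < wdist E w r u} := by
  intro u hu
  rcases Relation.ReflTransGen.cases_head hu.1 with heq | ⟨z, hz, _⟩
  · subst heq; exact hv
  · have huS : ¬ (((d - ω : ℕ) : ℕ∞) < wdist E w r u ∧ wdist E w r u ≤ (d : ℕ∞)) := hz.2.1
    rcases le_or_gt (wdist E w r u) ((d - ω : ℕ) : ℕ∞) with hle | hgt
    · exfalso
      have := cross hw hωd hu.1 hle
      have hle2 : ((d - ω : ℕ) : ℕ∞) ≤ (d : ℕ∞) := by exact_mod_cast Nat.sub_le d ω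
      exact absurd (le_trans this hle2) (not_le_of_gt hv)
    · rcases le_or_gt (wdist E w r u) (d : ℕ∞) with hle | hgt2
      · exact absurd ⟨hgt, hle⟩ huS
      · exact hgt2

lemma scc_mid {S : Set V} {v : V} (hv : v ∈ S) : scc (edgesAvoiding E S) v = {v} := by
  ext u
  simp only [Set.mem_singleton_iff]
  constructor
  · intro hu
    rcases Relation.ReflTransGen.cases_head hu.2 with heq | ⟨z, hz, _⟩
    · exact heq.symm
    · exact absurd hv hz.2.1
  · rintro rfl
    exact ⟨Relation.ReflTransGen.refl, Relation.ReflTransGen.refl⟩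

end Cross

lemma ncard_add_le [Fintype V] {s t : Set V} (h : Disjoint s t) :
    s.ncard + t.ncard ≤ Fintype.card V := by
  rw [← Set.ncard_union_eq h (Set.toFinite s) (Set.toFinite t)]
  have := Set.ncard_le_ncard (Set.subset_univ (s ∪ t)) (Set.toFinite _)
  simpa [Set.ncard_univ, Nat.card_eq_fintype_card] using this

lemma analytic (n k m : ℕ) (q : ℝ) (hn : 2 ≤ n) (hk : 1 ≤ k) (h2k : 2 * k ≤ n)
    (hq : 1 < q) (hmq : (m : ℝ) = 2 * q * Real.logb 2 n) :
    ((n : ℝ)) ^ 2 ≤ (k : ℝ) ^ 2 * (q / (q - 1)) ^ (m - 1) := by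
  have hL : 1 ≤ Real.logb 2 n := by
    rw [show (1:ℝ) = Real.logb 2 2 by simp]
    exact Real.logb_le_logb_of_le (by norm_num) (by norm_num) (by exact_mod_cast hn)
  have hq0 : (0:ℝ) < q - 1 := by linarith
  have hqpos : (0:ℝ) < q := by linarith
  set ρ := q / (q - 1) with hρdef
  have hρ1 : 1 < ρ := by
    rw [lt_div_iff₀ hq0]; linarith
  have hρ0 : 0 < ρ := by linarith
  have hlogρ : 1 / q ≤ Real.log ρ := by
    have h0 : (0:ℝ) < (q - 1) / q := by positivity
    have h1 := Real.log_le_sub_one_of_pos h0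
    have h2 : Real.log ρ = - Real.log ((q - 1) / q) := by
      rw [← Real.log_inv]
      congr 1
      rw [hρdef]
      field_simp
    have h3 : (q - 1) / q - 1 = -(1 / q) := by field_simp; ring
    rw [h2]; rw [h3] at h1; linarith
  have hm3 : 3 ≤ m := by
    have h2' : (2:ℝ) < (m : ℝ) := by nlinarith
    have : 2 < m := by exact_mod_cast h2'
    omega
  have hlog2pos : (0:ℝ) < Real.log 2 := Real.log_pos (by norm_num)
  have hlog2lt : Real.log 2 < 0.6931471808 := Real.log_two_lt_d9
  have hnpos : (0:ℝ) < n := by positivity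
  have hkpos : (0:ℝ) < k := by exact_mod_cast hk
  have hlogn_eq : 2 * q * Real.log n = (m : ℝ) * Real.log 2 := by
    rw [hmq]
    unfold Real.logb
    field_simp
  have hnk : (0:ℝ) < (n : ℝ) / k := by positivity
  suffices hkey : 2 * Real.log ((n : ℝ) / k) ≤ ((m - 1 : ℕ) : ℝ) * Real.log ρ by
    have hx : ((n : ℝ) / k) ^ 2 ≤ ρ ^ (m - 1) := by
      rw [← Real.log_le_log_iff (by positivity) (by positivity)]
      rw [Real.log_pow, Real.log_pow]
      push_cast
      linarith [hkey]
    calc ((n:ℝ))^2 = (k:ℝ)^2 * ((n:ℝ)/k)^2 := by field_simp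
      _ ≤ (k:ℝ)^2 * ρ ^ (m-1) := by
          apply mul_le_mul_of_nonneg_left hx (by positivity)
  have hm1 : ((m - 1 : ℕ) : ℝ) = (m : ℝ) - 1 := by
    have : 1 ≤ m := by omega
    push_cast [this]; ring
  rw [hm1]
  have hlogdiv : Real.log ((n:ℝ)/k) = Real.log n - Real.log k :=
    Real.log_div (by positivity) (by positivity)
  rw [hlogdiv]
  have hstep : ((m:ℝ) - 1) * (1/q) ≤ ((m:ℝ) - 1) * Real.log ρ := by
    apply mul_le_mul_of_nonneg_left hlogρ
    have : (3:ℝ) ≤ (m:ℝ) := by exact_mod_cast hm3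
    linarith
  rcases Nat.lt_or_ge k 2 with hk1 | hk2
  · have hk1' : k = 1 := by omega
    subst hk1'
    simp only [Nat.cast_one, Real.log_one, sub_zero]
    rcases Nat.lt_or_ge m 4 with hm4 | hm4
    · have hm3' : m = 3 := by omega
      have hn2 : n = 2 := by
        by_contra hne
        have hn3 : 3 ≤ n := by omega
        have h89 : Real.log 8 < Real.log 9 := Real.log_lt_log (by norm_num) (by norm_num)
        have h8 : Real.log 8 = 3 * Real.log 2 := by
          rw [show (8:ℝ) = 2 ^ 3 by norm_num, Real.log_pow]; push_cast; ring
        have h9 : Real.log 9 = 2 * Real.log 3 := by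
          rw [show (9:ℝ) = 3 ^ 2 by norm_num, Real.log_pow]; push_cast; ring
        have hlogn3 : Real.log 3 ≤ Real.log n :=
          Real.log_le_log (by norm_num) (by exact_mod_cast hn3)
        have hx1 : 3 * Real.log 2 < 2 * Real.log n := by linarith
        have hx2 : 2 * Real.log n < 2 * q * Real.log n := by
          nlinarith [Real.log_pos (show (1:ℝ) < n by exact_mod_cast (by omega : 1 < n))]
        have : 3 * Real.log 2 < (m:ℝ) * Real.log 2 := by rw [← hlogn_eq]; linarith
        rw [hm3'] at this
        norm_num at this
      subst hn2
      subst hm3'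
      have hLeq : Real.logb 2 ((2:ℕ) : ℝ) = 1 := by
        norm_num [Real.logb_self_eq_one]
      rw [hLeq] at hmq
      have hq32 : q = 3 / 2 := by push_cast at hmq; linarith
      have hρ3 : ρ = 3 := by rw [hρdef, hq32]; norm_num
      rw [hρ3]
      norm_num
      rw [Real.log_le_log_iff (by norm_num) (by norm_num)] <;> norm_num
    · have hm4' : (4:ℝ) ≤ (m:ℝ) := by exact_mod_cast hm4
      have hx1 : (m:ℝ) * Real.log 2 ≤ (m:ℝ) - 1 := by nlinarith
      calc 2 * Real.log n = (1/q) * ((m:ℝ) * Real.log 2) := by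
            field_simp
            linarith [hlogn_eq]
        _ ≤ (1/q) * ((m:ℝ) - 1) := by
            apply mul_le_mul_of_nonneg_left hx1 (by positivity)
        _ = ((m:ℝ) - 1) * (1/q) := by ring
        _ ≤ _ := hstep
  · have hlogk : Real.log 2 ≤ Real.log k :=
      Real.log_le_log (by norm_num) (by exact_mod_cast hk2)
    have hm3' : (3:ℝ) ≤ (m:ℝ) := by exact_mod_cast hm3
    calc 2 * (Real.log n - Real.log k) ≤ 2 * Real.log n - 2 * Real.log 2 := by linarith
      _ = (1/q) * ((m:ℝ) * Real.log 2 - 2 * q * Real.log 2) := by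
          field_simp
          linarith [hlogn_eq]
      _ ≤ (1/q) * (((m:ℝ) - 2) * Real.log 2) := by
          apply mul_le_mul_of_nonneg_left _ (by positivity)
          have h4 : 2 * Real.log 2 ≤ 2 * q * Real.log 2 := by nlinarith [hlog2pos]
          linarith
      _ ≤ (1/q) * ((m:ℝ) - 1) := by
          apply mul_le_mul_of_nonneg_left _ (by positivity)
          have h5 : ((m:ℝ) - 2) * Real.log 2 ≤ ((m:ℝ) - 2) * 1 :=
            mul_le_mul_of_nonneg_left (by linarith) (by linarith)
          linarith
      _ = ((m:ℝ) - 1) * (1/q) := by ring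
      _ ≤ _ := hstep

lemma select (n k m : ℕ) (q : ℝ) (b : ℕ → ℕ) (hn : 2 ≤ n) (hk : 1 ≤ k) (h2k : 2 * k ≤ n)
    (hq_eq : (m : ℝ) = 2 * q * Real.logb 2 n) (hm2 : 2 ≤ m)
    (hbmono : ∀ {i i' : ℕ}, i ≤ i' → b i ≤ b i') (hbn : ∀ i, b i ≤ n) (hb0 : k ≤ b 0)
    (htop : b (m - 1) + k ≤ n) :
    ∃ i, 1 ≤ i ∧ i ≤ m - 1 ∧
      q * ((b i : ℝ) - b (i - 1)) ≤ (b i : ℝ) ∧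
      q * ((b i : ℝ) - b (i - 1)) ≤ (n : ℝ) - b (i - 1) := by
  rcases le_or_gt q 1 with hqle | hqgt
  · refine ⟨1, le_rfl, by omega, ?_, ?_⟩
    · have hs0 : (0:ℝ) ≤ (b 1 : ℝ) - b 0 := by
        have h' : (b 0 : ℝ) ≤ b 1 := by exact_mod_cast hbmono (show (0:ℕ) ≤ 1 by omega)
        linarith
      have hb0R : (0:ℝ) ≤ (b 0 : ℝ) := by positivity
      calc q * ((b 1 : ℝ) - b 0) ≤ 1 * ((b 1 : ℝ) - b 0) :=
            mul_le_mul_of_nonneg_right hqle hs0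
        _ ≤ (b 1 : ℝ) := by linarith
    · have hs0 : (0:ℝ) ≤ (b 1 : ℝ) - b 0 := by
        have h' : (b 0 : ℝ) ≤ b 1 := by exact_mod_cast hbmono (show (0:ℕ) ≤ 1 by omega)
        linarith
      have hbn1 : (b 1 : ℝ) ≤ n := by exact_mod_cast hbn 1
      calc q * ((b 1 : ℝ) - b 0) ≤ 1 * ((b 1 : ℝ) - b 0) :=
            mul_le_mul_of_nonneg_right hqle hs0
        _ ≤ (n : ℝ) - b 0 := by linarith
  · by_contra hcon
    push_neg at hcon
    set ρ : ℝ := q / (q - 1) with hρdef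
    have hq0 : (0:ℝ) < q - 1 := by linarith
    have hρ0 : (0:ℝ) < ρ := by positivity
    have chain : ∀ j, j ≤ m - 1 →
        ρ ^ j * (b 0 : ℝ) * ((n : ℝ) - b j) ≤ (b j : ℝ) * ((n : ℝ) - b 0) := by
      intro j
      induction j with
      | zero => intro _; rw [pow_zero, one_mul]
      | succ j ih =>
        intro hj
        have hj' : j ≤ m - 1 := by omega
        have ihj := ih hj'
        have hbj1 : (b j : ℝ) ≤ b (j+1) := by exact_mod_cast hbmono (Nat.le_succ j)
        have hvmono : (n : ℝ) - b (j+1) ≤ (n : ℝ) - b j := by linarith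
        have hvnn : (0:ℝ) ≤ (n : ℝ) - b (j+1) := by
          have h' : (b (j+1) : ℝ) ≤ n := by exact_mod_cast hbn (j+1)
          linarith
        have hv0nn : (0:ℝ) ≤ (n : ℝ) - b 0 := by
          have h' : (b 0 : ℝ) ≤ n := by exact_mod_cast hbn 0
          linarith
        have hfail := hcon (j+1) (by omega) (by omega)
        simp only [Nat.add_sub_cancel] at hfail
        rcases le_or_gt (q * ((b (j+1) : ℝ) - b j)) (b (j+1)) with hle | hLcase
        · have hR := hfail hle
          have hvv : ρ * ((n:ℝ) - b (j+1)) ≤ (n:ℝ) - b j := by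
            rw [hρdef, div_mul_eq_mul_div, div_le_iff₀ hq0]
            linarith
          calc ρ ^ (j+1) * (b 0 : ℝ) * ((n:ℝ) - b (j+1))
              = ρ ^ j * (b 0 : ℝ) * (ρ * ((n:ℝ) - b (j+1))) := by ring
            _ ≤ ρ ^ j * (b 0 : ℝ) * ((n:ℝ) - b j) := by
                apply mul_le_mul_of_nonneg_left hvv (by positivity)
            _ ≤ (b j : ℝ) * ((n:ℝ) - b 0) := ihj
            _ ≤ (b (j+1) : ℝ) * ((n:ℝ) - b 0) :=
                mul_le_mul_of_nonneg_right hbj1 hv0nn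
        · have hbb : ρ * (b j : ℝ) ≤ (b (j+1) : ℝ) := by
            rw [hρdef, div_mul_eq_mul_div, div_le_iff₀ hq0]
            linarith
          calc ρ ^ (j+1) * (b 0 : ℝ) * ((n:ℝ) - b (j+1))
              ≤ ρ ^ (j+1) * (b 0 : ℝ) * ((n:ℝ) - b j) := by
                apply mul_le_mul_of_nonneg_left hvmono (by positivity)
            _ = ρ * (ρ ^ j * (b 0 : ℝ) * ((n:ℝ) - b j)) := by ring
            _ ≤ ρ * ((b j : ℝ) * ((n:ℝ) - b 0)) :=
                mul_le_mul_of_nonneg_left ihj (le_of_lt hρ0)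
            _ = (ρ * (b j : ℝ)) * ((n:ℝ) - b 0) := by ring
            _ ≤ (b (j+1) : ℝ) * ((n:ℝ) - b 0) :=
                mul_le_mul_of_nonneg_right hbb hv0nn
    have hfinal := chain (m-1) le_rfl
    have hana := analytic n k m q hn hk h2k hqgt hq_eq
    have hbmR : (b (m-1) : ℝ) ≤ (n:ℝ) - k := by
      have h' : ((b (m-1) + k : ℕ) : ℝ) ≤ n := by exact_mod_cast htop
      push_cast at h'
      linarith
    have hvmR : (k : ℝ) ≤ (n:ℝ) - b (m-1) := by
      have h' : ((b (m-1) + k : ℕ) : ℝ) ≤ n := by exact_mod_cast htop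
      push_cast at h'
      linarith
    have hb0R : (k : ℝ) ≤ (b 0 : ℝ) := by exact_mod_cast hb0
    have hv0R : (n:ℝ) - b 0 ≤ (n:ℝ) - k := by linarith
    have hkR : (1:ℝ) ≤ k := by exact_mod_cast hk
    have h2kR : 2 * (k:ℝ) ≤ n := by exact_mod_cast h2k
    have hnkR : (0:ℝ) ≤ (n:ℝ) - k := by linarith
    have hρpow : (0:ℝ) < ρ ^ (m-1) := by positivity
    have hlow : ρ ^ (m-1) * (k:ℝ) * k ≤ ρ ^ (m-1) * (b 0 : ℝ) * ((n:ℝ) - b (m-1)) := by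
      have e1 : ρ ^ (m-1) * (k:ℝ) * k ≤ ρ ^ (m-1) * (b 0:ℝ) * k := by
        apply mul_le_mul_of_nonneg_right _ (by positivity)
        apply mul_le_mul_of_nonneg_left hb0R (le_of_lt hρpow)
      have e2 : ρ ^ (m-1) * (b 0:ℝ) * k ≤ ρ ^ (m-1) * (b 0 : ℝ) * ((n:ℝ) - b (m-1)) := by
        apply mul_le_mul_of_nonneg_left hvmR (by positivity)
      linarith
    have hhigh : (b (m-1) : ℝ) * ((n:ℝ) - b 0) ≤ ((n:ℝ) - k) * ((n:ℝ) - k) := by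
      have hbnn : (0:ℝ) ≤ (b (m-1) : ℝ) := by positivity
      have e1 : (b (m-1) : ℝ) * ((n:ℝ) - b 0) ≤ (b (m-1) : ℝ) * ((n:ℝ) - k) :=
        mul_le_mul_of_nonneg_left hv0R hbnn
      have e2 : (b (m-1) : ℝ) * ((n:ℝ) - k) ≤ ((n:ℝ) - k) * ((n:ℝ) - k) :=
        mul_le_mul_of_nonneg_right hbmR hnkR
      linarith
    have hnR : (2:ℝ) ≤ n := by exact_mod_cast hn
    nlinarith [hana, hfinal, hlow, hhigh, hkR, hnkR, hnR, h2kR,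
      mul_le_mul_of_nonneg_left h2kR (show (0:ℝ) ≤ k by positivity),
      mul_pos (show (0:ℝ) < n by linarith) (show (0:ℝ) < k by linarith)]

end WThinAux

/-- the WThinLayer lemma (existence content). -/
theorem stmt7 {V : Type*} [Fintype V] (E : V → V → Prop) (w : V → V → ℕ) (ω : ℕ)
    (hw : ∀ a b, E a b → 1 ≤ w a b ∧ w a b < ω)
    (r : V) (hn : 2 ≤ Fintype.card V)
    (d1 d2 : ℕ) (hd : d1 < d2) (hdiv1 : ω ∣ d1) (hdiv2 : ω ∣ d2)
    (hgap : 2 * ω * Real.logb 2 (Fintype.card V) ≤ (d2 : ℝ) - d1)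
    (k : ℕ) (hk : 1 ≤ k)
    (h1 : k ≤ {v : V | wdist E w r v ≤ (d1 : ℕ∞)}.ncard)
    (h2 : k ≤ {v : V | (d2 : ℕ∞) ≤ wdist E w r v}.ncard) :
    ∃ d : ℕ, ω ∣ d ∧ d1 < d ∧ d ≤ d2 ∧
      QualSep E ((d2 - d1 : ℝ) / (2 * ω * Real.logb 2 (Fintype.card V)))
        {v : V | ((d - ω : ℕ) : ℕ∞) < wdist E w r v ∧ wdist E w r v ≤ (d : ℕ∞)} ∧
      ∀ v : V,
        (scc (edgesAvoiding E
            {v : V | ((d - ω : ℕ) : ℕ∞) < wdist E w r v ∧ wdist E w r v ≤ (d : ℕ∞)}) v).ncard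
          ≤ Fintype.card V - k := by
  classical
  open WThinAux in
  set n := Fintype.card V with hndef
  have hω1 : 1 ≤ ω := by
    rcases Nat.eq_zero_or_pos ω with h0 | h
    · exfalso
      rw [h0, zero_dvd_iff] at hdiv2
      omega
    · exact h
  have hL1 : 1 ≤ Real.logb 2 n := by
    rw [show (1:ℝ) = Real.logb 2 2 by simp]
    exact Real.logb_le_logb_of_le (by norm_num) (by norm_num) (by exact_mod_cast hn)
  have hLpos : 0 < Real.logb 2 (n : ℝ) := by linarith
  set q : ℝ := ((d2 : ℝ) - d1) / (2 * ω * Real.logb 2 n) with hqdef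
  have hdvd : ω ∣ (d2 - d1) := Nat.dvd_sub hdiv2 hdiv1
  set m := (d2 - d1) / ω with hmdef
  have hm : d2 - d1 = m * ω := (Nat.div_mul_cancel hdvd).symm
  have hd2 : d2 = d1 + m * ω := by omega
  have hmR : (m : ℝ) * ω = (d2 : ℝ) - d1 := by
    have h' : ((m * ω : ℕ) : ℝ) = ((d2 - d1 : ℕ) : ℝ) := by rw [← hm]
    rw [Nat.cast_sub (le_of_lt hd)] at h'
    push_cast at h' ⊢
    linarith
  have hωR : (0:ℝ) < (ω : ℝ) := by exact_mod_cast hω1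
  have hq_eq : (m : ℝ) = 2 * q * Real.logb 2 n := by
    have hd21 : (d2:ℝ) - d1 = (m:ℝ) * ω := hmR.symm
    rw [hqdef, hd21]
    field_simp
  have hq1 : 1 ≤ q := by
    rw [hqdef, le_div_iff₀ (by positivity)]
    linarith [hgap]
  have hm2 : 2 ≤ m := by
    have hx : (2:ℝ) * ω * 1 ≤ (m:ℝ) * ω := by
      calc (2:ℝ) * ω * 1 ≤ 2 * ω * Real.logb 2 n := by
            apply mul_le_mul_of_nonneg_left hL1 (by positivity)
        _ ≤ (d2 : ℝ) - d1 := hgap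
        _ = (m:ℝ) * ω := hmR.symm
    have hx2 : (2:ℝ) ≤ (m:ℝ) :=
      (mul_le_mul_iff_left₀ hωR).mp (by linarith : (2:ℝ) * ω ≤ (m:ℝ) * ω)
    exact_mod_cast hx2
  -- the balls and their sizes
  set B : ℕ → Set V := fun j => {v : V | wdist E w r v ≤ (j : ℕ∞)} with hBdef
  set b : ℕ → ℕ := fun i => (B (d1 + i * ω)).ncard with hbdef
  have hBmono : ∀ {j j' : ℕ}, j ≤ j' → B j ⊆ B j' := by
    intro j j' h v hv
    simp only [hBdef, Set.mem_setOf_eq] at hv ⊢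
    exact le_trans hv (by exact_mod_cast h)
  have hbmono : ∀ {i i' : ℕ}, i ≤ i' → b i ≤ b i' := by
    intro i i' h
    apply Set.ncard_le_ncard _ (Set.toFinite _)
    exact hBmono (Nat.add_le_add_left (Nat.mul_le_mul_right ω h) d1)
  have hbn : ∀ i, b i ≤ n := by
    intro i
    have := Set.ncard_le_ncard (Set.subset_univ (B (d1 + i * ω))) (Set.toFinite _)
    simpa [Set.ncard_univ, Nat.card_eq_fintype_card] using this
  have hb0 : k ≤ b 0 := by
    have heq : B (d1 + 0 * ω) = {v : V | wdist E w r v ≤ (d1 : ℕ∞)} := by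
      simp [hBdef]
    show k ≤ (B (d1 + 0 * ω)).ncard
    rw [heq]
    exact h1
  have htop : ∀ j, j ≤ m - 1 → b j + k ≤ n := by
    intro j hj
    have hlt : d1 + j * ω < d2 := by
      have h5 : j * ω + ω ≤ m * ω := by
        have := Nat.mul_le_mul_right ω (show j + 1 ≤ m by omega)
        simpa [Nat.succ_mul] using this
      omega
    have hdisj : Disjoint (B (d1 + j * ω)) {v : V | (d2 : ℕ∞) ≤ wdist E w r v} := by
      rw [Set.disjoint_left]
      intro v hv hv2
      simp only [hBdef, Set.mem_setOf_eq] at hv hv2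
      have h6 : ((d1 + j * ω : ℕ) : ℕ∞) < (d2 : ℕ∞) := by exact_mod_cast hlt
      exact lt_irrefl _ (lt_of_le_of_lt (le_trans hv2 hv) h6)
    have hcc : b j + {v : V | (d2 : ℕ∞) ≤ wdist E w r v}.ncard ≤ n := ncard_add_le hdisj
    omega
  have h2k : 2 * k ≤ n := by
    have hdisj : Disjoint {v : V | wdist E w r v ≤ (d1 : ℕ∞)}
        {v : V | (d2 : ℕ∞) ≤ wdist E w r v} := by
      rw [Set.disjoint_left]
      intro v hv hv2
      simp only [Set.mem_setOf_eq] at hv hv2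
      have h6 : ((d1 : ℕ) : ℕ∞) < (d2 : ℕ∞) := by exact_mod_cast hd
      exact lt_irrefl _ (lt_of_le_of_lt (le_trans hv2 hv) h6)
    have := ncard_add_le hdisj
    omega
  obtain ⟨i, hi1, him, hsucc1, hsucc2⟩ :=
    select n k m q b hn hk h2k hq_eq hm2 @hbmono hbn hb0 (htop (m-1) le_rfl)
  set d := d1 + i * ω with hddef
  have hiω : ω ≤ i * ω := Nat.le_mul_of_pos_left ω (by omega)
  have hωd : ω ≤ d := by omega
  have hdω : d - ω = d1 + (i - 1) * ω := by
    have h7 : i * ω = (i - 1) * ω + ω := by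
      have hi' : i - 1 + 1 = i := by omega
      calc i * ω = (i - 1 + 1) * ω := by rw [hi']
        _ = (i - 1) * ω + ω := by rw [Nat.succ_mul]
    rw [hddef]
    omega
  have hile : i ≤ m := by omega
  have hdled2 : d ≤ d2 := by
    rw [hd2, hddef]
    exact Nat.add_le_add_left (Nat.mul_le_mul_right ω hile) d1
  set S : Set V := {v : V | ((d - ω : ℕ) : ℕ∞) < wdist E w r v ∧ wdist E w r v ≤ (d : ℕ∞)}
    with hSdef
  have hSeq : S = B d \ B (d - ω) := by
    ext v
    simp only [hSdef, hBdef, Set.mem_setOf_eq, Set.mem_diff]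
    constructor
    · rintro ⟨hgt, hle⟩
      exact ⟨hle, not_le_of_gt hgt⟩
    · rintro ⟨hle, hgt⟩
      exact ⟨lt_of_not_ge hgt, hle⟩
  have hSsub : B (d - ω) ⊆ B d := hBmono (Nat.sub_le d ω)
  have hBd : (B d).ncard = b i := rfl
  have hBdω : (B (d - ω)).ncard = b (i - 1) := by
    rw [hdω]
  have hble : b (i - 1) ≤ b i := hbmono (Nat.sub_le i 1)
  have hScard : S.ncard = b i - b (i - 1) := by
    rw [hSeq, Set.ncard_diff hSsub (Set.toFinite _), hBd, hBdω]
  have hScardR : (S.ncard : ℝ) = (b i : ℝ) - b (i - 1) := by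
    rw [hScard, Nat.cast_sub hble]
  have hbiR : (b i : ℝ) ≤ n := by exact_mod_cast hbn i
  have hlowset : {u : V | wdist E w r u ≤ ((d - ω : ℕ) : ℕ∞)} = B (d - ω) := by
    simp only [hBdef]
  have hcompl : {u : V | (d : ℕ∞) < wdist E w r u} = (B d)ᶜ := by
    ext u
    simp only [hBdef, Set.mem_setOf_eq, Set.mem_compl_iff, not_le]
  have hcomplcard : {u : V | (d : ℕ∞) < wdist E w r u}.ncard = n - b i := by
    rw [hcompl]
    have := Set.ncard_add_ncard_compl (B d)
    rw [Nat.card_eq_fintype_card] at this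
    have hbi := hbn i
    rw [hBd] at this
    omega
  have hd1d : d1 < d := by omega
  refine ⟨d, Dvd.dvd.add hdiv1 (dvd_mul_left ω i), hd1d, hdled2, ?_, ?_⟩
  · -- QualSep
    unfold QualSep
    intro v
    rw [← hndef, ← hSdef]
    rcases le_or_gt (wdist E w r v) ((d - ω : ℕ) : ℕ∞) with hlow | hrest
    · have hsub := scc_low hw hωd hlow
      have hcard : (scc (edgesAvoiding E S) v).ncard ≤ b (i - 1) := by
        have h' := Set.ncard_le_ncard hsub (Set.toFinite _)
        rw [hlowset, hBdω] at h'
        exact h'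
      have hcardR : ((scc (edgesAvoiding E S) v).ncard : ℝ) ≤ b (i - 1) := by exact_mod_cast hcard
      calc ((scc (edgesAvoiding E S) v).ncard : ℝ) ≤ b (i - 1) := hcardR
        _ ≤ (n : ℝ) - q * S.ncard := by rw [hScardR]; linarith [hsucc2]
    · rcases le_or_gt (wdist E w r v) (d : ℕ∞) with hmid | hhigh
      · have hvS : v ∈ S := ⟨hrest, hmid⟩
        rw [scc_mid hvS, Set.ncard_singleton]
        have hb1R : (k : ℝ) ≤ (b (i-1) : ℝ) := by
          exact_mod_cast le_trans hb0 (hbmono (Nat.zero_le _))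
        have hkR : (1:ℝ) ≤ k := by exact_mod_cast hk
        have hqs : q * S.ncard ≤ (n : ℝ) - b (i - 1) := by
          rw [hScardR]; linarith [hsucc2]
        push_cast
        linarith
      · have hsub := scc_high hw hωd hhigh
        have hcard : (scc (edgesAvoiding E S) v).ncard ≤ n - b i := by
          have h' := Set.ncard_le_ncard hsub (Set.toFinite _)
          rw [hcomplcard] at h'
          exact h'
        have hcardR : ((scc (edgesAvoiding E S) v).ncard : ℝ) ≤ (n : ℝ) - b i := by
          have h' : ((scc (edgesAvoiding E S) v).ncard : ℝ) ≤ ((n - b i : ℕ) : ℝ) := by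
            exact_mod_cast hcard
          rw [Nat.cast_sub (hbn i)] at h'
          exact h'
        calc ((scc (edgesAvoiding E S) v).ncard : ℝ) ≤ (n : ℝ) - b i := hcardR
          _ ≤ (n : ℝ) - q * S.ncard := by rw [hScardR]; linarith [hsucc1]
  · -- every SCC has at most n - k vertices
    intro v
    rw [← hSdef]
    rcases le_or_gt (wdist E w r v) ((d - ω : ℕ) : ℕ∞) with hlow | hrest
    · have hsub := scc_low hw hωd hlow
      have hcard : (scc (edgesAvoiding E S) v).ncard ≤ b (i - 1) := by
        have h' := Set.ncard_le_ncard hsub (Set.toFinite _)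
        rw [hlowset, hBdω] at h'
        exact h'
      have := htop (i - 1) (by omega)
      omega
    · rcases le_or_gt (wdist E w r v) (d : ℕ∞) with hmid | hhigh
      · have hvS : v ∈ S := ⟨hrest, hmid⟩
        rw [scc_mid hvS, Set.ncard_singleton]
        omega
      · have hsub := scc_high hw hωd hhigh
        have hdisj : Disjoint {u : V | (d : ℕ∞) < wdist E w r u}
            {v : V | wdist E w r v ≤ (d1 : ℕ∞)} := by
          rw [Set.disjoint_left]
          intro u hu hu2
          simp only [Set.mem_setOf_eq] at hu hu2
          have hdd : ((d1 : ℕ) : ℕ∞) < (d : ℕ∞) := by exact_mod_cast hd1d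
          exact lt_irrefl _ (lt_trans (lt_of_le_of_lt hu2 hdd) hu)
        have hcc := ncard_add_le hdisj
        have hsc : (scc (edgesAvoiding E S) v).ncard ≤ {u : V | (d : ℕ∞) < wdist E w r u}.ncard :=
          Set.ncard_le_ncard hsub (Set.toFinite _)
        omega
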